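/- Let 0 < p < 2 and let f, g : (0,∞) → [0,∞) be antitone (nonincreasing) functions with ∫_0^∞ f(s)² ds = ∫_0^∞ g(s)² ds < ∞ and ∫_0^t f(s)² ds ≤ ∫_0^t g(s)² ds for every t > 0. If ∫_0^∞ f(s)^p ds < ∞, then ∫_0^∞ g(s)^p ds < ∞ and (∫_0^∞ g(s)^p ds)^{1/p} ≤ (∫_0^∞ f(s)^p ds)^{1/p}. -/

import Mathlib

open MeasureTheory ENNReal

namespace Stmt4Aux

open Set

/-- Kernel identity: for `0 < q < 1` and `v ≥ 0`,
`ofReal (q*(1-q)) * ∫_{r>0} min(v,r) r^(q-2) dr = v^q` (in `ℝ≥0∞`). -/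
lemma kernel (q : ℝ) (hq0 : 0 < q) (hq1 : q < 1) (v : ℝ) (hv : 0 ≤ v) :
    ENNReal.ofReal (q * (1 - q)) *
      ∫⁻ r in Set.Ioi (0 : ℝ),
        min (ENNReal.ofReal v) (ENNReal.ofReal r) * ENNReal.ofReal r ^ (q - 2) =
    ENNReal.ofReal v ^ q := by
  rcases eq_or_lt_of_le hv with hv0 | hv0
  · simp [← hv0, Real.zero_rpow hq0.ne', ENNReal.zero_rpow_of_pos hq0]
  have hqne : q ≠ 0 := hq0.ne'
  have h1q : (1:ℝ) - q ≠ 0 := by linarith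
  have hq1' : q - 1 ≠ 0 := by linarith
  have hsplit : Set.Ioi (0 : ℝ) = Set.Ioc 0 v ∪ Set.Ioi v := (Set.Ioc_union_Ioi_eq_Ioi hv).symm
  have hdisj : Disjoint (Set.Ioc (0:ℝ) v) (Set.Ioi v) := Set.Ioc_disjoint_Ioi le_rfl
  rw [hsplit, lintegral_union measurableSet_Ioi hdisj]
  -- first piece
  have h1 : (∫⁻ r in Set.Ioc (0:ℝ) v,
      min (ENNReal.ofReal v) (ENNReal.ofReal r) * ENNReal.ofReal r ^ (q - 2))
      = ENNReal.ofReal (v ^ q / q) := by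
    have hcong : ∀ r ∈ Set.Ioc (0:ℝ) v,
        min (ENNReal.ofReal v) (ENNReal.ofReal r) * ENNReal.ofReal r ^ (q - 2)
          = ENNReal.ofReal (r ^ (q - 1)) := by
      intro r hr
      have hr0 : 0 < r := hr.1
      rw [min_eq_right (ENNReal.ofReal_le_ofReal hr.2),
        ENNReal.ofReal_rpow_of_pos hr0, ← ENNReal.ofReal_mul hr0.le]
      congr 1
      rw [show q - 1 = 1 + (q - 2) by ring, Real.rpow_add hr0, Real.rpow_one]
    rw [setLIntegral_congr_fun measurableSet_Ioc hcong]
    have hint : IntegrableOn (fun r : ℝ => r ^ (q - 1)) (Set.Ioc 0 v) := by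
      have := (intervalIntegral.intervalIntegrable_rpow' (a := 0) (b := v)
        (r := q - 1) (by linarith)).1
      simpa [Set.uIoc_of_le hv] using this.mono_set (Set.Ioc_subset_Ioc_left le_rfl)
    rw [← ofReal_integral_eq_lintegral_ofReal hint
      ((ae_restrict_mem measurableSet_Ioc).mono fun r hr =>
        Real.rpow_nonneg hr.1.le _)]
    congr 1
    rw [← intervalIntegral.integral_of_le hv,
      integral_rpow (Or.inl (by linarith : (-1:ℝ) < q - 1))]
    rw [show q - 1 + 1 = q by ring, Real.zero_rpow hq0.ne']
    ring
  -- second piece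
  have h2 : (∫⁻ r in Set.Ioi v,
      min (ENNReal.ofReal v) (ENNReal.ofReal r) * ENNReal.ofReal r ^ (q - 2))
      = ENNReal.ofReal (v ^ q / (1 - q)) := by
    have hcong : ∀ r ∈ Set.Ioi v,
        min (ENNReal.ofReal v) (ENNReal.ofReal r) * ENNReal.ofReal r ^ (q - 2)
          = ENNReal.ofReal v * ENNReal.ofReal r ^ (q - 2) := by
      intro r hr
      rw [min_eq_left (ENNReal.ofReal_le_ofReal (le_of_lt hr))]
    have hwmeas : Measurable fun r : ℝ => ENNReal.ofReal r ^ (q - 2) :=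
      ENNReal.continuous_rpow_const.measurable.comp ENNReal.measurable_ofReal
    rw [setLIntegral_congr_fun measurableSet_Ioi hcong,
      lintegral_const_mul _ hwmeas,
      setLIntegral_congr_fun measurableSet_Ioi
        (fun r (hr : v < r) => ENNReal.ofReal_rpow_of_pos (hv0.trans hr))]
    have hint : IntegrableOn (fun r : ℝ => r ^ (q - 2)) (Set.Ioi v) :=
      integrableOn_Ioi_rpow_of_lt (by linarith) hv0
    rw [← ofReal_integral_eq_lintegral_ofReal hint
      ((ae_restrict_mem measurableSet_Ioi).mono fun r hr =>
        Real.rpow_nonneg (hv0.trans hr).le _)]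
    rw [integral_Ioi_rpow_of_lt (by linarith) hv0, ← ENNReal.ofReal_mul hv]
    congr 1
    have hvq : v * v ^ (q - 1) = v ^ q := by
      nth_rewrite 1 [← Real.rpow_one v]
      rw [← Real.rpow_add hv0]
      norm_num
    rw [show q - 2 + 1 = q - 1 by ring]
    rw [show v * (-v ^ (q - 1) / (q - 1)) = v * v ^ (q - 1) / (1 - q) by
      field_simp; ring, hvq]
  have hvq0 : (0:ℝ) ≤ v ^ q := Real.rpow_nonneg hv _
  rw [h1, h2, ← ENNReal.ofReal_add (div_nonneg hvq0 hq0.le)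
      (div_nonneg hvq0 (by linarith)),
    ← ENNReal.ofReal_mul (mul_nonneg hq0.le (by linarith)),
    ENNReal.ofReal_rpow_of_nonneg hv hq0.le]
  congr 1
  field_simp
  ring

/-- Majorization implies comparison of integrals of `min (· ) r` at every level `r`. -/
lemma min_le_min (a b : ℝ → ℝ≥0∞) (hameas : Measurable a) (hbmeas : Measurable b)
    (ha : AntitoneOn a (Set.Ioi 0))
    (hab : (∫⁻ x in Set.Ioi (0:ℝ), a x) = ∫⁻ x in Set.Ioi (0:ℝ), b x)
    (hfin : (∫⁻ x in Set.Ioi (0:ℝ), a x) < ∞)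
    (hmaj : ∀ t > (0:ℝ), (∫⁻ x in Set.Ioc (0:ℝ) t, a x) ≤ ∫⁻ x in Set.Ioc (0:ℝ) t, b x)
    (r : ℝ≥0∞) (hr0 : 0 < r) :
    (∫⁻ x in Set.Ioi (0:ℝ), min (b x) r) ≤ ∫⁻ x in Set.Ioi (0:ℝ), min (a x) r := by
  set S : Set ℝ := Set.Ioi 0 ∩ {x | r < a x} with hS
  have hSm : MeasurableSet S := measurableSet_Ioi.inter (hameas measurableSet_Ioi)
  have hSdown : ∀ x ∈ S, ∀ y, 0 < y → y ≤ x → y ∈ S := by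
    intro x hx y hy hyx
    exact ⟨hy, lt_of_lt_of_le hx.2 (ha hy hx.1 hyx)⟩
  have hSfin : volume S ≠ ∞ := by
    intro hcon
    have h1 : r * volume S ≤ ∫⁻ x in S, a x := by
      rw [← MeasureTheory.setLIntegral_const S r]
      exact lintegral_mono_ae ((ae_restrict_mem hSm).mono fun x hx => (hx.2).le)
    have h2 : (∫⁻ x in S, a x) ≤ ∫⁻ x in Set.Ioi (0:ℝ), a x :=
      lintegral_mono_set (Set.inter_subset_left)
    rw [hcon, ENNReal.mul_top hr0.ne'] at h1
    exact (lt_irrefl _ (lt_of_le_of_lt (h1.trans h2) hfin)).elim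
  set t : ℝ := (volume S).toReal with htdef
  have ht0 : 0 ≤ t := ENNReal.toReal_nonneg
  have hvolS : volume S = ENNReal.ofReal t := (ENNReal.ofReal_toReal hSfin).symm
  have hSsub : S ⊆ Set.Ioc 0 t := by
    intro x hx
    refine ⟨hx.1, ?_⟩
    have hsub : Set.Ioo 0 x ⊆ S := fun y hy => hSdown x hx y hy.1 hy.2.le
    have := measure_mono (μ := (volume : Measure ℝ)) hsub
    rw [Real.volume_Ioo, hvolS, sub_zero] at this
    exact (ENNReal.ofReal_le_ofReal_iff ht0).mp this
  have hSsup : Set.Ioo 0 t ⊆ S := by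
    intro y hy
    by_contra hyS
    have hsub : S ⊆ Set.Ioc 0 y := by
      intro x hx
      refine ⟨hx.1, ?_⟩
      by_contra hcon
      exact hyS (hSdown x hx y hy.1 (not_le.mp hcon).le)
    have := measure_mono (μ := (volume : Measure ℝ)) hsub
    rw [Real.volume_Ioc, hvolS, sub_zero] at this
    exact absurd ((ENNReal.ofReal_le_ofReal_iff hy.1.le).mp this) (not_le.mpr hy.2)
  have hsplit : ∀ h : ℝ → ℝ≥0∞,
      (∫⁻ x in Set.Ioi (0:ℝ), h x) = (∫⁻ x in Set.Ioc 0 t, h x) + ∫⁻ x in Set.Ioi t, h x := by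
    intro h
    rw [← Set.Ioc_union_Ioi_eq_Ioi ht0,
      lintegral_union measurableSet_Ioi (Set.Ioc_disjoint_Ioi le_rfl)]
  -- tails comparison
  have htail : (∫⁻ x in Set.Ioi t, b x) ≤ ∫⁻ x in Set.Ioi t, a x := by
    rcases eq_or_lt_of_le ht0 with h | h
    · rw [← h]; exact le_of_eq hab.symm
    · have hIocb_fin : (∫⁻ x in Set.Ioc (0:ℝ) t, b x) ≠ ∞ := by
        refine ne_of_lt (lt_of_le_of_lt (lintegral_mono_set Set.Ioc_subset_Ioi_self) ?_)
        rw [← hab]; exact hfin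
      have key : (∫⁻ x in Set.Ioc (0:ℝ) t, b x) + (∫⁻ x in Set.Ioi t, b x)
          ≤ (∫⁻ x in Set.Ioc (0:ℝ) t, b x) + ∫⁻ x in Set.Ioi t, a x := by
        calc (∫⁻ x in Set.Ioc (0:ℝ) t, b x) + (∫⁻ x in Set.Ioi t, b x)
            = ∫⁻ x in Set.Ioi (0:ℝ), b x := (hsplit b).symm
          _ = ∫⁻ x in Set.Ioi (0:ℝ), a x := hab.symm
          _ = (∫⁻ x in Set.Ioc (0:ℝ) t, a x) + ∫⁻ x in Set.Ioi t, a x := hsplit a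
          _ ≤ (∫⁻ x in Set.Ioc (0:ℝ) t, b x) + ∫⁻ x in Set.Ioi t, a x :=
              add_le_add_left (hmaj t h) _
      exact (ENNReal.add_le_add_iff_left hIocb_fin).mp key
  calc (∫⁻ x in Set.Ioi (0:ℝ), min (b x) r)
      = (∫⁻ x in Set.Ioc 0 t, min (b x) r) + ∫⁻ x in Set.Ioi t, min (b x) r :=
        hsplit _
    _ ≤ r * ENNReal.ofReal t + ∫⁻ x in Set.Ioi t, a x := by
        refine add_le_add ?_ ?_
        · calc (∫⁻ x in Set.Ioc 0 t, min (b x) r) ≤ ∫⁻ _ in Set.Ioc (0:ℝ) t, r :=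
              lintegral_mono fun x => min_le_right _ _
          _ = r * ENNReal.ofReal t := by
              rw [MeasureTheory.setLIntegral_const, Real.volume_Ioc, sub_zero]
        · exact (lintegral_mono fun x => min_le_left _ _).trans htail
    _ ≤ (∫⁻ x in Set.Ioc 0 t, min (a x) r) + ∫⁻ x in Set.Ioi t, min (a x) r := by
        refine add_le_add ?_ ?_
        · have : (∫⁻ x in Set.Ioo (0:ℝ) t, min (a x) r) = r * ENNReal.ofReal t := by
            rw [setLIntegral_congr_fun measurableSet_Ioo
              (fun x hx => min_eq_right (le_of_lt (hSsup hx).2) :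
                Set.EqOn (fun x => min (a x) r) (fun _ => r) (Set.Ioo (0:ℝ) t)),
              MeasureTheory.setLIntegral_const, Real.volume_Ioo, sub_zero]
          rw [← this]
          exact lintegral_mono_set Set.Ioo_subset_Ioc_self
        · refine le_of_eq ?_
          refine (setLIntegral_congr_fun measurableSet_Ioi (fun x hx => ?_)).symm
          have hxS : x ∉ S := fun hxS => absurd (hSsub hxS).2 (not_le.mpr hx)
          have hx0 : x ∈ Set.Ioi (0:ℝ) := lt_of_le_of_lt ht0 hx
          have : a x ≤ r := by
            by_contra hcon
            exact hxS ⟨hx0, not_le.mp hcon⟩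
          exact min_eq_left this
    _ = ∫⁻ x in Set.Ioi (0:ℝ), min (a x) r := (hsplit _).symm

/-- Representation of `∫ F^q` via the min kernel. -/
lemma repr (q : ℝ) (hq0 : 0 < q) (hq1 : q < 1) (F : ℝ → ℝ≥0∞) (hF : Measurable F)
    (hFfin : ∀ x ∈ Set.Ioi (0:ℝ), F x ≠ ∞) :
    (∫⁻ x in Set.Ioi (0:ℝ), F x ^ q) =
      ENNReal.ofReal (q * (1 - q)) *
        ∫⁻ r in Set.Ioi (0:ℝ),
          (∫⁻ x in Set.Ioi (0:ℝ), min (F x) (ENNReal.ofReal r)) * ENNReal.ofReal r ^ (q - 2) := by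
  have hw : Measurable fun r : ℝ => ENNReal.ofReal r ^ (q - 2) :=
    ENNReal.continuous_rpow_const.measurable.comp ENNReal.measurable_ofReal
  have hk : Measurable (Function.uncurry fun x r : ℝ =>
      min (F x) (ENNReal.ofReal r) * ENNReal.ofReal r ^ (q - 2)) :=
    ((hF.comp measurable_fst).min (ENNReal.measurable_ofReal.comp measurable_snd)).mul
      (hw.comp measurable_snd)
  calc (∫⁻ x in Set.Ioi (0:ℝ), F x ^ q)
      = ∫⁻ x in Set.Ioi (0:ℝ), ENNReal.ofReal (q * (1 - q)) *
          ∫⁻ r in Set.Ioi (0:ℝ),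
            min (F x) (ENNReal.ofReal r) * ENNReal.ofReal r ^ (q - 2) := by
        refine setLIntegral_congr_fun measurableSet_Ioi (fun x hx => ?_)
        have h1 : F x = ENNReal.ofReal (F x).toReal := (ENNReal.ofReal_toReal (hFfin x hx)).symm
        rw [h1, kernel q hq0 hq1 _ ENNReal.toReal_nonneg]
    _ = ENNReal.ofReal (q * (1 - q)) * ∫⁻ x in Set.Ioi (0:ℝ),
          ∫⁻ r in Set.Ioi (0:ℝ),
            min (F x) (ENNReal.ofReal r) * ENNReal.ofReal r ^ (q - 2) := by
        rw [lintegral_const_mul _ (hk.lintegral_prod_right)]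
    _ = ENNReal.ofReal (q * (1 - q)) * ∫⁻ r in Set.Ioi (0:ℝ),
          ∫⁻ x in Set.Ioi (0:ℝ),
            min (F x) (ENNReal.ofReal r) * ENNReal.ofReal r ^ (q - 2) := by
        rw [lintegral_lintegral_swap hk.aemeasurable]
    _ = ENNReal.ofReal (q * (1 - q)) * ∫⁻ r in Set.Ioi (0:ℝ),
          (∫⁻ x in Set.Ioi (0:ℝ), min (F x) (ENNReal.ofReal r)) *
            ENNReal.ofReal r ^ (q - 2) := by
        congr 1
        refine setLIntegral_congr_fun measurableSet_Ioi (fun r _ => ?_)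
        rw [lintegral_mul_const _ (hF.min measurable_const)]

end Stmt4Aux

/-- Let `0 < p < 2` and `f, g : (0,∞) → [0,∞)` be nonincreasing with
`∫₀^∞ f² = ∫₀^∞ g² < ∞` and `∫₀^t f² ≤ ∫₀^t g²` for all `t > 0`. If `∫₀^∞ f^p < ∞`,
then `∫₀^∞ g^p < ∞` and `(∫₀^∞ g^p)^{1/p} ≤ (∫₀^∞ f^p)^{1/p}`. -/
theorem stmt4 (p : ℝ) (hp0 : 0 < p) (hp2 : p < 2)
    (f g : ℝ → ℝ)
    (hf : AntitoneOn f (Set.Ioi 0)) (hg : AntitoneOn g (Set.Ioi 0))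
    (hf0 : ∀ s ∈ Set.Ioi (0 : ℝ), 0 ≤ f s) (hg0 : ∀ s ∈ Set.Ioi (0 : ℝ), 0 ≤ g s)
    (heq : (∫⁻ s in Set.Ioi (0 : ℝ), ENNReal.ofReal (f s ^ 2)) =
           (∫⁻ s in Set.Ioi (0 : ℝ), ENNReal.ofReal (g s ^ 2)))
    (hfin : (∫⁻ s in Set.Ioi (0 : ℝ), ENNReal.ofReal (f s ^ 2)) < ∞)
    (hmaj : ∀ t > (0 : ℝ), (∫⁻ s in Set.Ioc (0 : ℝ) t, ENNReal.ofReal (f s ^ 2)) ≤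
                           (∫⁻ s in Set.Ioc (0 : ℝ) t, ENNReal.ofReal (g s ^ 2)))
    (hfp : (∫⁻ s in Set.Ioi (0 : ℝ), ENNReal.ofReal (f s ^ p)) < ∞) :
    (∫⁻ s in Set.Ioi (0 : ℝ), ENNReal.ofReal (g s ^ p)) < ∞ ∧
    (∫⁻ s in Set.Ioi (0 : ℝ), ENNReal.ofReal (g s ^ p)).toReal ^ (1 / p) ≤
      (∫⁻ s in Set.Ioi (0 : ℝ), ENNReal.ofReal (f s ^ p)).toReal ^ (1 / p) := by
  set q : ℝ := p / 2 with hqdef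
  have hq0 : 0 < q := by positivity
  have hq1 : q < 1 := by rw [hqdef]; linarith
  -- extended (globally antitone, hence measurable) versions of f², g²
  set A : ℝ → ℝ≥0∞ := fun x => if 0 < x then ENNReal.ofReal (f x ^ 2) else ∞ with hAdef
  set B : ℝ → ℝ≥0∞ := fun x => if 0 < x then ENNReal.ofReal (g x ^ 2) else ∞ with hBdef
  have hanti : ∀ (h : ℝ → ℝ), AntitoneOn h (Set.Ioi 0) → (∀ s ∈ Set.Ioi (0:ℝ), 0 ≤ h s) →
      Antitone (fun x => if 0 < x then ENNReal.ofReal (h x ^ 2) else ∞) := by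
    intro h hh hh0 x y hxy
    by_cases hx : 0 < x
    · have hy : 0 < y := lt_of_lt_of_le hx hxy
      simp only [if_pos hx, if_pos hy]
      exact ENNReal.ofReal_le_ofReal (pow_le_pow_left₀ (hh0 y hy) (hh hx hy hxy) 2)
    · simp only [if_neg hx, le_top]
  have hAanti : Antitone A := hanti f hf hf0
  have hBanti : Antitone B := hanti g hg hg0
  have hAmeas : Measurable A := hAanti.measurable
  have hBmeas : Measurable B := hBanti.measurable
  have hAeq : ∀ x ∈ Set.Ioi (0:ℝ), A x = ENNReal.ofReal (f x ^ 2) := fun x hx => if_pos hx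
  have hBeq : ∀ x ∈ Set.Ioi (0:ℝ), B x = ENNReal.ofReal (g x ^ 2) := fun x hx => if_pos hx
  have hAi : (∫⁻ x in Set.Ioi (0:ℝ), A x) = ∫⁻ s in Set.Ioi (0:ℝ), ENNReal.ofReal (f s ^ 2) :=
    setLIntegral_congr_fun measurableSet_Ioi hAeq
  have hBi : (∫⁻ x in Set.Ioi (0:ℝ), B x) = ∫⁻ s in Set.Ioi (0:ℝ), ENNReal.ofReal (g s ^ 2) :=
    setLIntegral_congr_fun measurableSet_Ioi hBeq
  have hAB : (∫⁻ x in Set.Ioi (0:ℝ), A x) = ∫⁻ x in Set.Ioi (0:ℝ), B x := by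
    rw [hAi, hBi, heq]
  have hAfin : (∫⁻ x in Set.Ioi (0:ℝ), A x) < ∞ := by rw [hAi]; exact hfin
  have hABmaj : ∀ t > (0:ℝ), (∫⁻ x in Set.Ioc (0:ℝ) t, A x) ≤ ∫⁻ x in Set.Ioc (0:ℝ) t, B x := by
    intro t ht
    have h1 : (∫⁻ x in Set.Ioc (0:ℝ) t, A x) = ∫⁻ s in Set.Ioc (0:ℝ) t, ENNReal.ofReal (f s ^ 2) :=
      setLIntegral_congr_fun measurableSet_Ioc (fun x hx => hAeq x hx.1)
    have h2 : (∫⁻ x in Set.Ioc (0:ℝ) t, B x) = ∫⁻ s in Set.Ioc (0:ℝ) t, ENNReal.ofReal (g s ^ 2) :=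
      setLIntegral_congr_fun measurableSet_Ioc (fun x hx => hBeq x hx.1)
    rw [h1, h2]; exact hmaj t ht
  -- identify `∫ A^q` with `∫ f^p`
  have hpow : ∀ (h : ℝ → ℝ), (∀ s ∈ Set.Ioi (0:ℝ), 0 ≤ h s) →
      ∀ x ∈ Set.Ioi (0:ℝ),
        (if 0 < x then ENNReal.ofReal (h x ^ 2) else ∞) ^ q = ENNReal.ofReal (h x ^ p) := by
    intro h hh0 x hx
    rw [if_pos (Set.mem_Ioi.mp hx), ENNReal.ofReal_rpow_of_nonneg (sq_nonneg _) hq0.le]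
    congr 1
    have hx0 : (0:ℝ) ≤ h x := hh0 x hx
    have h2q : ((2:ℕ):ℝ) * q = p := by rw [hqdef]; push_cast; ring
    rw [← Real.rpow_natCast (h x) 2, ← Real.rpow_mul hx0, h2q]
  have hAq : (∫⁻ x in Set.Ioi (0:ℝ), A x ^ q) = ∫⁻ s in Set.Ioi (0:ℝ), ENNReal.ofReal (f s ^ p) :=
    setLIntegral_congr_fun measurableSet_Ioi (hpow f hf0)
  have hBq : (∫⁻ x in Set.Ioi (0:ℝ), B x ^ q) = ∫⁻ s in Set.Ioi (0:ℝ), ENNReal.ofReal (g s ^ p) :=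
    setLIntegral_congr_fun measurableSet_Ioi (hpow g hg0)
  -- main comparison
  have hmain : (∫⁻ x in Set.Ioi (0:ℝ), B x ^ q) ≤ ∫⁻ x in Set.Ioi (0:ℝ), A x ^ q := by
    rw [Stmt4Aux.repr q hq0 hq1 A hAmeas (fun x hx => by rw [hAeq x hx]; exact ENNReal.ofReal_ne_top),
      Stmt4Aux.repr q hq0 hq1 B hBmeas (fun x hx => by rw [hBeq x hx]; exact ENNReal.ofReal_ne_top)]
    refine mul_le_mul_right ?_ _
    refine lintegral_mono_ae ((ae_restrict_mem measurableSet_Ioi).mono fun r hr => ?_)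
    refine mul_le_mul_left ?_ _
    exact Stmt4Aux.min_le_min A B hAmeas hBmeas
      (hAanti.antitoneOn _) hAB hAfin hABmaj (ENNReal.ofReal r)
      (ENNReal.ofReal_pos.mpr (Set.mem_Ioi.mp hr))
  have hle : (∫⁻ s in Set.Ioi (0:ℝ), ENNReal.ofReal (g s ^ p)) ≤
      ∫⁻ s in Set.Ioi (0:ℝ), ENNReal.ofReal (f s ^ p) := by
    rw [← hBq, ← hAq]; exact hmain
  refine ⟨lt_of_le_of_lt hle hfp, ?_⟩
  exact Real.rpow_le_rpow ENNReal.toReal_nonneg (ENNReal.toReal_mono hfp.ne hle) (by positivity)
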